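/- Let λ, c > 0. Define u : ℝ³ × (0,∞) → ℝ on the open cone {(x,t) : ‖x‖ < ct, t > 0} by u(x,t) = (e^{−λt}/π) (λ/(2c))² · I₁((λ/c)√(c²t² − ‖x‖²)) / √(c²t² − ‖x‖²). Then u satisfies the three-dimensional telegraph equation ∂²u/∂t² + 2λ ∂u/∂t − c² Δu = 0 on the open cone, where Δ = Σ_{j=1}^3 ∂²/∂x_j². -/

import Mathlib

open Real

/-- The modified Bessel function of order one,
`I₁(x) = Σ_{k=0}^∞ (x/2)^{2k+1} / (k! (k+1)!)`. -/
noncomputable def besselI1 (x : ℝ) : ℝ :=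
  ∑' k : ℕ, (x / 2) ^ (2 * k + 1) / ((k.factorial : ℝ) * ((k + 1).factorial : ℝ))

/- ### Auxiliary power series development -/

noncomputable def bbAux (q : ℝ) (k : ℕ) : ℝ :=
  q ^ k / ((k.factorial : ℝ) * ((k + 1).factorial : ℝ))

noncomputable def ggAux (q w : ℝ) : ℝ := ∑' k : ℕ, bbAux q k * w ^ k

noncomputable def ggAux' (q w : ℝ) : ℝ :=
  ∑' k : ℕ, ((k : ℝ) + 1) * bbAux q (k + 1) * w ^ k

noncomputable def ggAux'' (q w : ℝ) : ℝ :=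
  ∑' k : ℕ, ((k : ℝ) + 1) * ((k : ℝ) + 2) * bbAux q (k + 2) * w ^ k

lemma bbAux_abs (q : ℝ) (k : ℕ) :
    |bbAux q k| = |q| ^ k / ((k.factorial : ℝ) * ((k + 1).factorial : ℝ)) := by
  rw [bbAux, abs_div, abs_pow]
  congr 1
  rw [abs_of_pos]
  positivity

/-- Master bound for all the series we consider. -/
lemma bmaster (q y R C : ℝ) (hR : 1 ≤ R) (hy : |y| ≤ R) (k e p : ℕ) (he : e ≤ k)
    (N : ℝ) (hN : 0 ≤ N)
    (hNle : N * (k.factorial : ℝ) ≤ (p.factorial : ℝ) * ((p + 1).factorial : ℝ))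
    (hqp : |q| ^ p ≤ C * |q| ^ k) (hC : 0 ≤ C) :
    N * |q| ^ p * |y| ^ e / ((p.factorial : ℝ) * ((p + 1).factorial : ℝ))
      ≤ C * ((|q| * R) ^ k / (k.factorial : ℝ)) := by
  have hR0 : (0 : ℝ) ≤ R := le_trans zero_le_one hR
  have hf0 : (0 : ℝ) < (k.factorial : ℝ) := by exact_mod_cast k.factorial_pos
  have h1 : |y| ^ e ≤ R ^ k :=
    le_trans (pow_le_pow_left₀ (abs_nonneg y) hy e) (pow_le_pow_right₀ hR he)
  rw [mul_pow, ← mul_div_assoc, div_le_div_iff₀ (by positivity) hf0]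
  calc N * |q| ^ p * |y| ^ e * (k.factorial : ℝ)
      = (N * (k.factorial : ℝ)) * (|q| ^ p * |y| ^ e) := by ring
    _ ≤ ((p.factorial : ℝ) * ((p + 1).factorial : ℝ)) * ((C * |q| ^ k) * R ^ k) := by
        apply mul_le_mul hNle (mul_le_mul hqp h1 (by positivity) (by positivity))
          (by positivity) (by positivity)
    _ = C * (|q| ^ k * R ^ k) * ((p.factorial : ℝ) * ((p + 1).factorial : ℝ)) := by ring

lemma summable_helper (C t : ℝ) {f : ℕ → ℝ}
    (h : ∀ k, |f k| ≤ C * (t ^ k / (k.factorial : ℝ))) : Summable f :=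
  (Summable.of_nonneg_of_le (fun k => abs_nonneg _) h
    ((Real.summable_pow_div_factorial t).mul_left C)).of_abs

/- Facts about factorials -/
lemma fact_cast_pos (k : ℕ) : (0 : ℝ) < (k.factorial : ℝ) := by
  exact_mod_cast k.factorial_pos

lemma one_le_fact (k : ℕ) : (1 : ℝ) ≤ (k.factorial : ℝ) := by
  exact_mod_cast Nat.one_le_iff_ne_zero.mpr k.factorial_ne_zero

lemma cast_le_fact_succ (k : ℕ) : (k : ℝ) ≤ ((k + 1).factorial : ℝ) := by
  exact_mod_cast (Nat.le_succ k).trans (Nat.self_le_factorial (k + 1))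

lemma cast_le_fact_succ2 (k : ℕ) : (k : ℝ) ≤ ((k + 2).factorial : ℝ) := by
  exact_mod_cast (by omega : k ≤ k + 2).trans (Nat.self_le_factorial (k + 2))

lemma fact_succ_cast (k : ℕ) :
    ((k + 1).factorial : ℝ) = ((k : ℝ) + 1) * (k.factorial : ℝ) := by
  rw [Nat.factorial_succ]; push_cast; ring

/- The six numerator bounds -/
lemma hNle1 (k : ℕ) :
    (1 : ℝ) * (k.factorial : ℝ) ≤ (k.factorial : ℝ) * ((k + 1).factorial : ℝ) := by
  rw [one_mul]
  exact le_mul_of_one_le_right (fact_cast_pos k).le (one_le_fact (k + 1))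

lemma hNle2 (k : ℕ) :
    (k : ℝ) * (k.factorial : ℝ) ≤ (k.factorial : ℝ) * ((k + 1).factorial : ℝ) := by
  calc (k : ℝ) * (k.factorial : ℝ) ≤ ((k + 1).factorial : ℝ) * (k.factorial : ℝ) :=
        mul_le_mul_of_nonneg_right (cast_le_fact_succ k) (fact_cast_pos k).le
    _ = (k.factorial : ℝ) * ((k + 1).factorial : ℝ) := mul_comm _ _

lemma hNle3 (k : ℕ) :
    ((k : ℝ) + 1) * (k.factorial : ℝ) ≤ ((k + 1).factorial : ℝ) * ((k + 1 + 1).factorial : ℝ) := by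
  rw [← fact_succ_cast]
  exact le_mul_of_one_le_right (fact_cast_pos (k + 1)).le (one_le_fact (k + 1 + 1))

lemma hNle4 (k : ℕ) :
    (((k : ℝ) + 1) * (k : ℝ)) * (k.factorial : ℝ)
      ≤ ((k + 1).factorial : ℝ) * ((k + 1 + 1).factorial : ℝ) := by
  calc (((k : ℝ) + 1) * (k : ℝ)) * (k.factorial : ℝ)
      = (k : ℝ) * (((k : ℝ) + 1) * (k.factorial : ℝ)) := by ring
    _ = (k : ℝ) * ((k + 1).factorial : ℝ) := by rw [← fact_succ_cast]
    _ ≤ ((k + 2).factorial : ℝ) * ((k + 1).factorial : ℝ) :=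
        mul_le_mul_of_nonneg_right (cast_le_fact_succ2 k) (fact_cast_pos (k + 1)).le
    _ = ((k + 1).factorial : ℝ) * ((k + 1 + 1).factorial : ℝ) := by
        rw [mul_comm]

lemma hNle6 (k : ℕ) :
    ((k : ℝ) * ((k : ℝ) + 1)) * (k.factorial : ℝ)
      ≤ ((k + 1).factorial : ℝ) * ((k + 1 + 1).factorial : ℝ) := by
  have := hNle4 k
  calc ((k : ℝ) * ((k : ℝ) + 1)) * (k.factorial : ℝ)
      = (((k : ℝ) + 1) * (k : ℝ)) * (k.factorial : ℝ) := by ring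
    _ ≤ _ := this

lemma fact_succ2_cast (k : ℕ) :
    ((k + 2).factorial : ℝ) = ((k : ℝ) + 2) * ((k : ℝ) + 1) * (k.factorial : ℝ) := by
  have h1 : (k + 2).factorial = (k + 2) * (k + 1).factorial := Nat.factorial_succ (k + 1)
  rw [h1, Nat.factorial_succ]; push_cast; ring

lemma hNle5 (k : ℕ) :
    (((k : ℝ) + 1) * ((k : ℝ) + 2)) * (k.factorial : ℝ)
      ≤ ((k + 2).factorial : ℝ) * ((k + 2 + 1).factorial : ℝ) := by
  calc (((k : ℝ) + 1) * ((k : ℝ) + 2)) * (k.factorial : ℝ)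
      = ((k + 2).factorial : ℝ) := by rw [fact_succ2_cast]; ring
    _ ≤ ((k + 2).factorial : ℝ) * ((k + 2 + 1).factorial : ℝ) :=
        le_mul_of_one_le_right (fact_cast_pos (k + 2)).le (one_le_fact (k + 2 + 1))

/- The canonical-form equalities and resulting bounds -/

lemma boundB1 (q y R : ℝ) (hR : 1 ≤ R) (hy : |y| ≤ R) (k : ℕ) :
    |bbAux q k * y ^ k| ≤ 1 * ((|q| * R) ^ k / (k.factorial : ℝ)) := by
  have e1 : |bbAux q k * y ^ k|
      = (1 : ℝ) * |q| ^ k * |y| ^ k / ((k.factorial : ℝ) * ((k + 1).factorial : ℝ)) := by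
    rw [abs_mul, bbAux_abs, abs_pow]; ring
  rw [e1]
  exact bmaster q y R 1 hR hy k k k le_rfl 1 zero_le_one (hNle1 k) (by rw [one_mul]) zero_le_one

lemma boundB2 (q y R : ℝ) (hR : 1 ≤ R) (hy : |y| ≤ R) (k : ℕ) :
    |bbAux q k * ((k : ℝ) * y ^ (k - 1))| ≤ 1 * ((|q| * R) ^ k / (k.factorial : ℝ)) := by
  have e1 : |bbAux q k * ((k : ℝ) * y ^ (k - 1))|
      = (k : ℝ) * |q| ^ k * |y| ^ (k - 1) / ((k.factorial : ℝ) * ((k + 1).factorial : ℝ)) := by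
    rw [abs_mul, bbAux_abs, abs_mul, Nat.abs_cast, abs_pow]; ring
  rw [e1]
  exact bmaster q y R 1 hR hy k (k - 1) k (Nat.sub_le k 1) (k : ℝ) (Nat.cast_nonneg k)
    (hNle2 k) (by rw [one_mul]) zero_le_one

lemma boundB3 (q y R : ℝ) (hR : 1 ≤ R) (hy : |y| ≤ R) (k : ℕ) :
    |((k : ℝ) + 1) * bbAux q (k + 1) * y ^ k| ≤ |q| * ((|q| * R) ^ k / (k.factorial : ℝ)) := by
  have e1 : |((k : ℝ) + 1) * bbAux q (k + 1) * y ^ k|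
      = ((k : ℝ) + 1) * |q| ^ (k + 1) * |y| ^ k
        / (((k + 1).factorial : ℝ) * ((k + 1 + 1).factorial : ℝ)) := by
    rw [abs_mul, abs_mul, bbAux_abs, abs_pow, abs_of_nonneg (by positivity : (0:ℝ) ≤ (k:ℝ)+1)]
    ring
  rw [e1]
  exact bmaster q y R |q| hR hy k k (k + 1) le_rfl ((k : ℝ) + 1) (by positivity)
    (hNle3 k) (le_of_eq (by rw [pow_succ]; ring)) (abs_nonneg q)

lemma boundB4 (q y R : ℝ) (hR : 1 ≤ R) (hy : |y| ≤ R) (k : ℕ) :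
    |((k : ℝ) + 1) * bbAux q (k + 1) * ((k : ℝ) * y ^ (k - 1))|
      ≤ |q| * ((|q| * R) ^ k / (k.factorial : ℝ)) := by
  have e1 : |((k : ℝ) + 1) * bbAux q (k + 1) * ((k : ℝ) * y ^ (k - 1))|
      = (((k : ℝ) + 1) * (k : ℝ)) * |q| ^ (k + 1) * |y| ^ (k - 1)
        / (((k + 1).factorial : ℝ) * ((k + 1 + 1).factorial : ℝ)) := by
    rw [abs_mul, abs_mul, abs_mul, bbAux_abs, abs_pow, Nat.abs_cast,
      abs_of_nonneg (by positivity : (0:ℝ) ≤ (k:ℝ)+1)]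
    ring
  rw [e1]
  exact bmaster q y R |q| hR hy k (k - 1) (k + 1) (Nat.sub_le k 1)
    (((k : ℝ) + 1) * (k : ℝ)) (by positivity) (hNle4 k)
    (le_of_eq (by rw [pow_succ]; ring)) (abs_nonneg q)

lemma boundB5 (q y R : ℝ) (hR : 1 ≤ R) (hy : |y| ≤ R) (k : ℕ) :
    |((k : ℝ) + 1) * ((k : ℝ) + 2) * bbAux q (k + 2) * y ^ k|
      ≤ |q| ^ 2 * ((|q| * R) ^ k / (k.factorial : ℝ)) := by
  have e1 : |((k : ℝ) + 1) * ((k : ℝ) + 2) * bbAux q (k + 2) * y ^ k|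
      = (((k : ℝ) + 1) * ((k : ℝ) + 2)) * |q| ^ (k + 2) * |y| ^ k
        / (((k + 2).factorial : ℝ) * ((k + 2 + 1).factorial : ℝ)) := by
    rw [abs_mul, abs_mul, abs_mul, bbAux_abs, abs_pow,
      abs_of_nonneg (by positivity : (0:ℝ) ≤ (k:ℝ)+1),
      abs_of_nonneg (by positivity : (0:ℝ) ≤ (k:ℝ)+2)]
    ring
  rw [e1]
  exact bmaster q y R (|q| ^ 2) hR hy k k (k + 2) le_rfl
    (((k : ℝ) + 1) * ((k : ℝ) + 2)) (by positivity) (hNle5 k)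
    (le_of_eq (by ring)) (by positivity)

lemma boundB6 (q y R : ℝ) (hR : 1 ≤ R) (hy : |y| ≤ R) (k : ℕ) :
    |(k : ℝ) * ((k : ℝ) + 1) * bbAux q (k + 1) * y ^ k|
      ≤ |q| * ((|q| * R) ^ k / (k.factorial : ℝ)) := by
  have e1 : |(k : ℝ) * ((k : ℝ) + 1) * bbAux q (k + 1) * y ^ k|
      = ((k : ℝ) * ((k : ℝ) + 1)) * |q| ^ (k + 1) * |y| ^ k
        / (((k + 1).factorial : ℝ) * ((k + 1 + 1).factorial : ℝ)) := by
    rw [abs_mul, abs_mul, abs_mul, bbAux_abs, abs_pow, Nat.abs_cast,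
      abs_of_nonneg (by positivity : (0:ℝ) ≤ (k:ℝ)+1)]
    ring
  rw [e1]
  exact bmaster q y R |q| hR hy k k (k + 1) le_rfl ((k : ℝ) * ((k : ℝ) + 1)) (by positivity)
    (hNle6 k) (le_of_eq (by rw [pow_succ]; ring)) (abs_nonneg q)

/- Summability of all the relevant series -/

lemma RmaxOK (w : ℝ) : 1 ≤ |w| + 1 ∧ |w| ≤ |w| + 1 :=
  ⟨by linarith [abs_nonneg w], by linarith⟩

lemma summableS1 (q w : ℝ) : Summable fun k : ℕ => bbAux q k * w ^ k :=
  summable_helper 1 (|q| * (|w| + 1)) fun k =>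
    boundB1 q w (|w| + 1) (RmaxOK w).1 (RmaxOK w).2 k

lemma summableS2 (q w : ℝ) : Summable fun k : ℕ => bbAux q k * ((k : ℝ) * w ^ (k - 1)) :=
  summable_helper 1 (|q| * (|w| + 1)) fun k =>
    boundB2 q w (|w| + 1) (RmaxOK w).1 (RmaxOK w).2 k

lemma summableS3 (q w : ℝ) : Summable fun k : ℕ => ((k : ℝ) + 1) * bbAux q (k + 1) * w ^ k :=
  summable_helper |q| (|q| * (|w| + 1)) fun k =>
    boundB3 q w (|w| + 1) (RmaxOK w).1 (RmaxOK w).2 k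

lemma summableS4 (q w : ℝ) :
    Summable fun k : ℕ => ((k : ℝ) + 1) * bbAux q (k + 1) * ((k : ℝ) * w ^ (k - 1)) :=
  summable_helper |q| (|q| * (|w| + 1)) fun k =>
    boundB4 q w (|w| + 1) (RmaxOK w).1 (RmaxOK w).2 k

lemma summableS5 (q w : ℝ) :
    Summable fun k : ℕ => ((k : ℝ) + 1) * ((k : ℝ) + 2) * bbAux q (k + 2) * w ^ k :=
  summable_helper (|q| ^ 2) (|q| * (|w| + 1)) fun k =>
    boundB5 q w (|w| + 1) (RmaxOK w).1 (RmaxOK w).2 k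

lemma summableS6 (q w : ℝ) :
    Summable fun k : ℕ => (k : ℝ) * ((k : ℝ) + 1) * bbAux q (k + 1) * w ^ k :=
  summable_helper |q| (|q| * (|w| + 1)) fun k =>
    boundB6 q w (|w| + 1) (RmaxOK w).1 (RmaxOK w).2 k

/- Derivatives of the series -/

lemma hasDerivAt_ggAux (q w : ℝ) : HasDerivAt (ggAux q) (ggAux' q w) w := by
  have hR1 : (1 : ℝ) ≤ |w| + 1 := (RmaxOK w).1
  have hmem : w ∈ Metric.ball (0 : ℝ) (|w| + 1) := by
    simp only [Metric.mem_ball, Real.dist_eq, sub_zero]; linarith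
  have hder : HasDerivAt (fun y => ∑' k : ℕ, bbAux q k * y ^ k)
      (∑' k : ℕ, bbAux q k * ((k : ℝ) * w ^ (k - 1))) w := by
    refine hasDerivAt_tsum_of_isPreconnected
      (Real.summable_pow_div_factorial (|q| * (|w| + 1))) Metric.isOpen_ball
      ((convex_ball (0 : ℝ) (|w| + 1)).isPreconnected)
      (fun k y _ => (hasDerivAt_pow k y).const_mul (bbAux q k)) ?_ hmem (summableS1 q w) hmem
    intro k y hy
    have hy' : |y| ≤ |w| + 1 := by
      simp only [Metric.mem_ball, Real.dist_eq, sub_zero] at hy; linarith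
    calc ‖bbAux q k * ((k : ℝ) * y ^ (k - 1))‖
        = |bbAux q k * ((k : ℝ) * y ^ (k - 1))| := rfl
      _ ≤ 1 * ((|q| * (|w| + 1)) ^ k / (k.factorial : ℝ)) := boundB2 q y (|w| + 1) hR1 hy' k
      _ = (|q| * (|w| + 1)) ^ k / (k.factorial : ℝ) := one_mul _
  have hshift : (∑' k : ℕ, bbAux q k * ((k : ℝ) * w ^ (k - 1))) = ggAux' q w := by
    rw [Summable.tsum_eq_zero_add (summableS2 q w)]
    simp only [Nat.cast_zero, zero_mul, mul_zero, zero_add]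
    rw [ggAux']
    exact tsum_congr fun k => by
      push_cast [Nat.add_sub_cancel]; ring
  rw [← hshift]
  exact hder

lemma hasDerivAt_ggAux' (q w : ℝ) : HasDerivAt (ggAux' q) (ggAux'' q w) w := by
  have hR1 : (1 : ℝ) ≤ |w| + 1 := (RmaxOK w).1
  have hmem : w ∈ Metric.ball (0 : ℝ) (|w| + 1) := by
    simp only [Metric.mem_ball, Real.dist_eq, sub_zero]; linarith
  have hder : HasDerivAt (fun y => ∑' k : ℕ, ((k : ℝ) + 1) * bbAux q (k + 1) * y ^ k)
      (∑' k : ℕ, ((k : ℝ) + 1) * bbAux q (k + 1) * ((k : ℝ) * w ^ (k - 1))) w := by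
    refine hasDerivAt_tsum_of_isPreconnected
      ((Real.summable_pow_div_factorial (|q| * (|w| + 1))).mul_left |q|) Metric.isOpen_ball
      ((convex_ball (0 : ℝ) (|w| + 1)).isPreconnected)
      (fun k y _ => (hasDerivAt_pow k y).const_mul (((k : ℝ) + 1) * bbAux q (k + 1)))
      ?_ hmem (summableS3 q w) hmem
    intro k y hy
    have hy' : |y| ≤ |w| + 1 := by
      simp only [Metric.mem_ball, Real.dist_eq, sub_zero] at hy; linarith
    exact boundB4 q y (|w| + 1) hR1 hy' k
  have hshift : (∑' k : ℕ, ((k : ℝ) + 1) * bbAux q (k + 1) * ((k : ℝ) * w ^ (k - 1)))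
      = ggAux'' q w := by
    rw [Summable.tsum_eq_zero_add (summableS4 q w)]
    simp only [Nat.cast_zero, zero_mul, mul_zero, zero_add]
    rw [ggAux'']
    exact tsum_congr fun k => by
      push_cast [Nat.add_sub_cancel]; ring
  rw [← hshift]
  exact hder

/- The key coefficient identity and ODE -/

lemma bbAux_succ (q : ℝ) (k : ℕ) :
    ((k : ℝ) + 1) * ((k : ℝ) + 2) * bbAux q (k + 1) = q * bbAux q k := by
  have h1 : ((k + 1).factorial : ℝ) = ((k : ℝ) + 1) * (k.factorial : ℝ) := fact_succ_cast k
  have h2 : ((k + 1 + 1).factorial : ℝ) = ((k : ℝ) + 2) * ((k + 1).factorial : ℝ) := by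
    rw [Nat.factorial_succ]; push_cast; ring
  have hf1 : (k.factorial : ℝ) ≠ 0 := (fact_cast_pos k).ne'
  have hf2 : ((k + 1).factorial : ℝ) ≠ 0 := (fact_cast_pos (k + 1)).ne'
  rw [bbAux, bbAux, h2, h1, pow_succ]
  field_simp

lemma ggAux_ode (q w : ℝ) :
    q * ggAux q w = 2 * ggAux' q w + w * ggAux'' q w := by
  have h3 : w * ggAux'' q w
      = ∑' k : ℕ, (k : ℝ) * ((k : ℝ) + 1) * bbAux q (k + 1) * w ^ k := by
    rw [ggAux'', ← tsum_mul_left, Summable.tsum_eq_zero_add (summableS6 q w)]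
    simp only [Nat.cast_zero, zero_mul, zero_add]
    exact tsum_congr fun k => by push_cast; ring
  have h2 : 2 * ggAux' q w = ∑' k : ℕ, 2 * (((k : ℝ) + 1) * bbAux q (k + 1) * w ^ k) := by
    rw [ggAux', tsum_mul_left]
  have h1 : q * ggAux q w = ∑' k : ℕ, q * (bbAux q k * w ^ k) := by
    rw [ggAux, tsum_mul_left]
  rw [h1, h2, h3, ← Summable.tsum_add ((summableS3 q w).mul_left 2) (summableS6 q w)]
  exact tsum_congr fun k => by
    linear_combination (-(w ^ k)) * bbAux_succ q k

/- Link with the Bessel function -/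

lemma besselI1_sqrt (a w : ℝ) (hw : 0 < w) :
    besselI1 (a * Real.sqrt w) = Real.sqrt w * (a / 2) * ggAux ((a / 2) ^ 2) w := by
  rw [besselI1, ggAux, ← tsum_mul_left]
  refine tsum_congr fun k => ?_
  have hsq : Real.sqrt w ^ 2 = w := Real.sq_sqrt hw.le
  have h1 : a * Real.sqrt w / 2 = (a / 2) * Real.sqrt w := by ring
  rw [h1, mul_pow, bbAux]
  rw [pow_succ ((a:ℝ)/2), pow_succ (Real.sqrt w), pow_mul, pow_mul, hsq]
  ring

/- Derivative congruence on open sets -/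

lemma deriv_congr_on_open {f g : ℝ → ℝ} {S : Set ℝ} (hS : IsOpen S)
    (h : ∀ s ∈ S, f s = g s) : ∀ s ∈ S, deriv f s = deriv g s := fun s hs =>
  Filter.EventuallyEq.deriv_eq (Filter.eventuallyEq_of_mem (hS.mem_nhds hs) h)

lemma norm_sq_eq_sum (y : EuclideanSpace ℝ (Fin 3)) : ‖y‖ ^ 2 = ∑ i, (y i) ^ 2 := by
  rw [EuclideanSpace.norm_eq, Real.sq_sqrt (by positivity)]
  exact Finset.sum_congr rfl fun i _ => by rw [Real.norm_eq_abs, sq_abs]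

lemma cone_update (x : EuclideanSpace ℝ (Fin 3)) (j : Fin 3) (s : ℝ)
    (y : EuclideanSpace ℝ (Fin 3)) (hy : y = Function.update x j s) :
    ‖y‖ ^ 2 = ‖x‖ ^ 2 - (x j) ^ 2 + s ^ 2 := by
  rw [norm_sq_eq_sum y, norm_sq_eq_sum x, hy]
  have h1 : ∀ i, (Function.update x j s i) ^ 2
      = Function.update (fun i => (x i) ^ 2) j (s ^ 2) i := fun i =>
    Function.apply_update (fun _ v => v ^ 2) x j s i
  rw [Finset.sum_congr rfl fun i _ => h1 i, Finset.sum_update_of_mem (Finset.mem_univ j)]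
  have h2 : ∑ i ∈ Finset.univ \ {j}, (x i) ^ 2 = (∑ i, (x i) ^ 2) - (x j) ^ 2 := by
    rw [Finset.sdiff_singleton_eq_erase, Finset.sum_erase_eq_sub (Finset.mem_univ j)]
  rw [h2]; ring

set_option maxHeartbeats 1000000 in
/-- the density
`u(x,t) = (e^{-λt}/π) (λ/(2c))² I₁((λ/c)√(c²t² - ‖x‖²)) / √(c²t² - ‖x‖²)`
of the three-dimensional random flight with changes of direction at even-valued
Poisson events satisfies the three-dimensional telegraph equation
`∂²u/∂t² + 2λ ∂u/∂t - c² Δu = 0` on the open cone `{(x,t) : ‖x‖ < ct, t > 0}`. -/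
theorem statement3 (lam c : ℝ) (hlam : 0 < lam) (hc : 0 < c)
    (u : EuclideanSpace ℝ (Fin 3) × ℝ → ℝ)
    (hu : ∀ (x : EuclideanSpace ℝ (Fin 3)) (t : ℝ), u (x, t) =
      Real.exp (-(lam * t)) / π * (lam / (2 * c)) ^ 2 *
        besselI1 (lam / c * Real.sqrt (c ^ 2 * t ^ 2 - ‖x‖ ^ 2)) /
        Real.sqrt (c ^ 2 * t ^ 2 - ‖x‖ ^ 2)) :
    ∀ (x : EuclideanSpace ℝ (Fin 3)) (t : ℝ), 0 < t → ‖x‖ < c * t →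
      iteratedDeriv 2 (fun s => u (x, s)) t
        + 2 * lam * deriv (fun s => u (x, s)) t
        - c ^ 2 * ∑ j : Fin 3,
            iteratedDeriv 2 (fun s => u (WithLp.toLp 2 (Function.update x j s), t)) (x j) = 0 := by
  intro x t ht hxt
  set q : ℝ := (lam / (2 * c)) ^ 2 with hqdef
  set a : ℝ := lam / c with hadef
  set K : ℝ := q * (a / 2) / π with hKdef
  have haq : (a / 2) ^ 2 = q := by rw [hadef, hqdef]; ring
  have hπ : (π : ℝ) ≠ 0 := Real.pi_ne_zero
  -- the key closed form on the cone
  have key : ∀ (y : EuclideanSpace ℝ (Fin 3)) (s : ℝ), 0 < c ^ 2 * s ^ 2 - ‖y‖ ^ 2 →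
      u (y, s) = Real.exp (-(lam * s)) * K * ggAux q (c ^ 2 * s ^ 2 - ‖y‖ ^ 2) := by
    intro y s hpos
    have hs : Real.sqrt (c ^ 2 * s ^ 2 - ‖y‖ ^ 2) ≠ 0 := (Real.sqrt_pos.mpr hpos).ne'
    rw [hu, besselI1_sqrt a _ hpos, haq, hKdef]
    rw [div_eq_iff hs]
    ring
  have hw0 : 0 < c ^ 2 * t ^ 2 - ‖x‖ ^ 2 := by
    have h1 : (0 : ℝ) ≤ ‖x‖ := norm_nonneg x
    nlinarith
  set w0 : ℝ := c ^ 2 * t ^ 2 - ‖x‖ ^ 2 with hw0def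
  set G0 : ℝ := ggAux q w0 with hG0
  set G1 : ℝ := ggAux' q w0 with hG1
  set G2 : ℝ := ggAux'' q w0 with hG2
  set E0 : ℝ := Real.exp (-(lam * t)) with hE0
  -- derivative of the inner function s ↦ c²s² - ‖x‖²
  have hW : ∀ s : ℝ, HasDerivAt (fun s : ℝ => c ^ 2 * s ^ 2 - ‖x‖ ^ 2) (2 * c ^ 2 * s) s := by
    intro s
    have h := ((hasDerivAt_pow 2 s).const_mul (c ^ 2)).sub_const (‖x‖ ^ 2)
    refine h.congr_deriv ?_
    push_cast
    ring
  have hGW : ∀ s : ℝ, HasDerivAt (fun s => ggAux q (c ^ 2 * s ^ 2 - ‖x‖ ^ 2))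
      (ggAux' q (c ^ 2 * s ^ 2 - ‖x‖ ^ 2) * (2 * c ^ 2 * s)) s := fun s =>
    (hasDerivAt_ggAux q _).comp s (hW s)
  have hG'W : ∀ s : ℝ, HasDerivAt (fun s => ggAux' q (c ^ 2 * s ^ 2 - ‖x‖ ^ 2))
      (ggAux'' q (c ^ 2 * s ^ 2 - ‖x‖ ^ 2) * (2 * c ^ 2 * s)) s := fun s =>
    (hasDerivAt_ggAux' q _).comp s (hW s)
  have hE : ∀ s : ℝ, HasDerivAt (fun s : ℝ => Real.exp (-(lam * s)))
      (-lam * Real.exp (-(lam * s))) s := by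
    intro s
    have h1 : HasDerivAt (fun s : ℝ => -(lam * s)) (-lam) s := by
      exact (((hasDerivAt_id s).const_mul lam).neg).congr_deriv (by ring)
    simpa [mul_comm] using h1.exp
  -- the time-side functions
  set T : ℝ → ℝ := fun s => Real.exp (-(lam * s)) * K * ggAux q (c ^ 2 * s ^ 2 - ‖x‖ ^ 2)
    with hTdef
  set T1 : ℝ → ℝ := fun s => Real.exp (-(lam * s)) * K *
    (-lam * ggAux q (c ^ 2 * s ^ 2 - ‖x‖ ^ 2)
      + 2 * c ^ 2 * s * ggAux' q (c ^ 2 * s ^ 2 - ‖x‖ ^ 2)) with hT1def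
  have hT : ∀ s : ℝ, HasDerivAt T (T1 s) s := by
    intro s
    have h := ((hE s).mul_const K).mul (hGW s)
    rw [hTdef, hT1def]
    refine h.congr_deriv ?_
    ring
  have hT1 : ∀ s : ℝ, HasDerivAt T1
      (Real.exp (-(lam * s)) * K *
        (lam ^ 2 * ggAux q (c ^ 2 * s ^ 2 - ‖x‖ ^ 2)
          - 4 * lam * c ^ 2 * s * ggAux' q (c ^ 2 * s ^ 2 - ‖x‖ ^ 2)
          + 2 * c ^ 2 * ggAux' q (c ^ 2 * s ^ 2 - ‖x‖ ^ 2)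
          + 4 * c ^ 4 * s ^ 2 * ggAux'' q (c ^ 2 * s ^ 2 - ‖x‖ ^ 2))) s := by
    intro s
    have hinner : HasDerivAt (fun s : ℝ =>
        -lam * ggAux q (c ^ 2 * s ^ 2 - ‖x‖ ^ 2)
          + 2 * c ^ 2 * s * ggAux' q (c ^ 2 * s ^ 2 - ‖x‖ ^ 2))
        (-lam * (ggAux' q (c ^ 2 * s ^ 2 - ‖x‖ ^ 2) * (2 * c ^ 2 * s))
          + ((2 * c ^ 2 * 1) * ggAux' q (c ^ 2 * s ^ 2 - ‖x‖ ^ 2)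
            + 2 * c ^ 2 * s * (ggAux'' q (c ^ 2 * s ^ 2 - ‖x‖ ^ 2) * (2 * c ^ 2 * s)))) s := by
      exact ((hGW s).const_mul (-lam)).add
        ((((hasDerivAt_id s).const_mul (2 * c ^ 2)).mul (hG'W s)))
    have h := ((hE s).mul_const K).mul hinner
    rw [hT1def]
    refine h.congr_deriv ?_
    ring
  -- identification of u with T near t in the time variable
  have hSopen : IsOpen {s : ℝ | 0 < c ^ 2 * s ^ 2 - ‖x‖ ^ 2} :=
    isOpen_lt continuous_const (by continuity)
  have htS : t ∈ {s : ℝ | 0 < c ^ 2 * s ^ 2 - ‖x‖ ^ 2} := hw0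
  have hfT : ∀ s ∈ {s : ℝ | 0 < c ^ 2 * s ^ 2 - ‖x‖ ^ 2}, (fun s => u (x, s)) s = T s :=
    fun s hs => key x s hs
  have hd1 : ∀ s ∈ {s : ℝ | 0 < c ^ 2 * s ^ 2 - ‖x‖ ^ 2},
      deriv (fun s => u (x, s)) s = deriv T s := deriv_congr_on_open hSopen hfT
  have hderivT : deriv T = T1 := funext fun s => (hT s).deriv
  have hderiv_u : deriv (fun s => u (x, s)) t = T1 t := by
    rw [hd1 t htS, hderivT]
  have hd2 : iteratedDeriv 2 (fun s => u (x, s)) t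
      = Real.exp (-(lam * t)) * K *
        (lam ^ 2 * G0 - 4 * lam * c ^ 2 * t * G1 + 2 * c ^ 2 * G1
          + 4 * c ^ 4 * t ^ 2 * G2) := by
    rw [iteratedDeriv_succ, iteratedDeriv_one]
    have h1 : deriv (deriv fun s => u (x, s)) t = deriv (deriv T) t :=
      deriv_congr_on_open hSopen hd1 t htS
    rw [h1, hderivT, (hT1 t).deriv, hG0, hG1, hG2, hw0def]
  -- spatial part
  have hspace : ∀ j : Fin 3,
      iteratedDeriv 2 (fun s => u (WithLp.toLp 2 (Function.update x j s), t)) (x j)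
        = E0 * K * (4 * (x j) ^ 2 * G2 - 2 * G1) := by
    intro j
    set A : ℝ := c ^ 2 * t ^ 2 - ‖x‖ ^ 2 + (x j) ^ 2 with hAdef
    have hAb : A - (x j) ^ 2 = w0 := by rw [hAdef, hw0def]; ring
    set P : ℝ → ℝ := fun s => E0 * K * ggAux q (A - s ^ 2) with hPdef
    set P1 : ℝ → ℝ := fun s => E0 * K * (ggAux' q (A - s ^ 2) * (-(2 * s))) with hP1def
    have hV : ∀ s : ℝ, HasDerivAt (fun s : ℝ => A - s ^ 2) (-(2 * s)) s := by
      intro s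
      have h := (hasDerivAt_pow 2 s).const_sub A
      refine h.congr_deriv ?_
      push_cast
      ring
    have hP : ∀ s : ℝ, HasDerivAt P (P1 s) s := by
      intro s
      have h := ((hasDerivAt_ggAux q _).comp s (hV s)).const_mul (E0 * K)
      rw [hPdef, hP1def]
      exact h
    have hP1 : ∀ s : ℝ, HasDerivAt P1
        (E0 * K * (4 * s ^ 2 * ggAux'' q (A - s ^ 2) - 2 * ggAux' q (A - s ^ 2))) s := by
      intro s
      have hinner : HasDerivAt (fun s : ℝ => ggAux' q (A - s ^ 2) * (-(2 * s)))
          ((ggAux'' q (A - s ^ 2) * (-(2 * s))) * (-(2 * s))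
            + ggAux' q (A - s ^ 2) * (-(2 * 1))) s := by
        exact ((hasDerivAt_ggAux' q _).comp s (hV s)).mul
          (((hasDerivAt_id s).const_mul 2).neg)
      have h := hinner.const_mul (E0 * K)
      rw [hP1def]
      refine h.congr_deriv ?_
      ring
    have hSopen' : IsOpen {s : ℝ | 0 < A - s ^ 2} :=
      isOpen_lt continuous_const (by continuity)
    have hbS : x j ∈ {s : ℝ | 0 < A - s ^ 2} := by
      simp only [Set.mem_setOf_eq, hAb]
      exact hw0
    have hfP : ∀ s ∈ {s : ℝ | 0 < A - s ^ 2},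
        (fun s => u (WithLp.toLp 2 (Function.update x j s), t)) s = P s := by
      intro s hs
      simp only [Set.mem_setOf_eq] at hs
      show u (WithLp.toLp 2 (Function.update x j s), t) = P s
      have hcu := cone_update x j s (WithLp.toLp 2 (Function.update x j s)) rfl
      rw [key (WithLp.toLp 2 (Function.update x j s)) t (by rw [hcu]; rw [hAdef] at hs; linarith), hcu,
        show c ^ 2 * t ^ 2 - (‖x‖ ^ 2 - (x j) ^ 2 + s ^ 2) = A - s ^ 2 by
          rw [hAdef]; ring,
        hPdef, hE0]
    have hd1' : ∀ s ∈ {s : ℝ | 0 < A - s ^ 2},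
        deriv (fun s => u (WithLp.toLp 2 (Function.update x j s), t)) s = deriv P s :=
      deriv_congr_on_open hSopen' hfP
    have hderivP : deriv P = P1 := funext fun s => (hP s).deriv
    rw [iteratedDeriv_succ, iteratedDeriv_one]
    have h1 : deriv (deriv fun s => u (WithLp.toLp 2 (Function.update x j s), t)) (x j)
        = deriv (deriv P) (x j) := deriv_congr_on_open hSopen' hd1' (x j) hbS
    rw [h1, hderivP, (hP1 (x j)).deriv, hAb, ← hG1, ← hG2]
  -- sum the spatial contributions
  have hsum : ∑ j : Fin 3, iteratedDeriv 2 (fun s => u (WithLp.toLp 2 (Function.update x j s), t)) (x j)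
      = E0 * K * (4 * ‖x‖ ^ 2 * G2 - 6 * G1) := by
    rw [Finset.sum_congr rfl fun j _ => hspace j]
    have h1 : ∑ j : Fin 3, (E0 * K * (4 * (x j) ^ 2 * G2 - 2 * G1))
        = (E0 * K * 4 * G2) * (∑ j : Fin 3, (x j) ^ 2) - 3 * (E0 * K * 2 * G1) := by
      rw [Finset.mul_sum,
        show (3 : ℝ) * (E0 * K * 2 * G1) = ∑ _j : Fin 3, E0 * K * 2 * G1 by
          simp only [Finset.sum_const, Finset.card_univ, Fintype.card_fin, nsmul_eq_mul]
          push_cast; ring,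
        ← Finset.sum_sub_distrib]
      exact Finset.sum_congr rfl fun j _ => by ring
    rw [h1, ← norm_sq_eq_sum]
    ring
  -- put everything together
  have hq4 : lam ^ 2 = 4 * c ^ 2 * q := by
    rw [hqdef]
    field_simp
    ring
  have hode : q * G0 = 2 * G1 + w0 * G2 := ggAux_ode q w0
  have hT1t : T1 t = E0 * K * (-lam * G0 + 2 * c ^ 2 * t * G1) := by
    rw [hT1def, hE0, hG0, hG1, hw0def]
  rw [hd2, hderiv_u, hT1t, hsum, ← hE0]
  linear_combination (-(4 * c ^ 2 * E0 * K)) * hode + (-(E0 * K * G0)) * hq4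
    + (-(4 * c ^ 2 * E0 * K * G2)) * hw0def
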